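/- Let q be an odd prime power, t an even divisor of q-1 with t ≥ 2, m = (q²-1)/t, g a primitive element of F_{q²}, θ = g^t, and r an integer with 1 ≤ r ≤ t. Define vectors a₂, v₂ ∈ F_{q²}^{rm} by: for 0 ≤ k ≤ r-1 and 0 ≤ ν ≤ m-1, the (km+ν)-th coordinate of a₂ is g^k θ^ν and of v₂ is g^{ν t/2}. Then for all integers i, j with 0 ≤ i, j ≤ (q+1)/2 + (q-1)/t - 2, the sum Σ over all coordinates of a₂^{qi+j} · v₂^{q+1}, i.e. Σ_{k=0}^{r-1} Σ_{ν=0}^{m-1} (g^k θ^ν)^{qi+j} θ^{ν(q+1)/2}, equals 0 in F_{q²}. -/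

import Mathlib

lemma key_not_dvd (P d i j : ℤ) (hd : 1 ≤ d) (hP : d ∣ P) (hP1 : 1 ≤ P)
    (hi0 : 0 ≤ i) (hj0 : 0 ≤ j) (hi : i ≤ P + d - 1) (hj : j ≤ P + d - 1) :
    ¬ (2 * (P + 1) * d ∣ (2 * P + 1) * i + j + (P + 1)) := by
  rintro ⟨c, hc⟩
  have hdP : d ≤ P := Int.le_of_dvd (by omega) hP
  have h1 : j + (P + 1) - i = 2 * (P + 1) * (d * c - i) := by linear_combination hc
  have hc0 : 0 ≤ d * c - i := by nlinarith
  have hc1 : d * c - i ≤ 1 := by nlinarith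
  interval_cases h : (d * c - i)
  · have hi' : i = d * c := by omega
    have hiw : P + 1 ≤ i ∧ i ≤ P + d - 1 := by omega
    obtain ⟨u, hu⟩ := hP
    have hdvd : d ∣ i - P := by rw [hi', hu]; exact ⟨c - u, by ring⟩
    have := Int.le_of_dvd (by omega) hdvd
    omega
  · have hi' : i + 1 = d * c := by omega
    have hiw : i + 1 ≤ d - 1 := by omega
    have hdvd : d ∣ i + 1 := ⟨c, hi'⟩
    have := Int.le_of_dvd (by omega) hdvd
    omega

theorem stmt_13 (q t r : ℕ) (hq : IsPrimePow q) (hqodd : Odd q) (hte : Even t)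
    (ht2 : 2 ≤ t) (htdvd : t ∣ q - 1) (hr : 1 ≤ r) (hrt : r ≤ t)
    (F : Type*) [Field F] [Fintype F] (hF : Fintype.card F = q ^ 2)
    (g : F) (hg : orderOf g = q ^ 2 - 1)
    (i j : ℕ) (hi : i ≤ (q + 1) / 2 + (q - 1) / t - 2)
    (hj : j ≤ (q + 1) / 2 + (q - 1) / t - 2) :
    ∑ k ∈ Finset.range r, ∑ ν ∈ Finset.range ((q ^ 2 - 1) / t),
      (g ^ k * (g ^ t) ^ ν) ^ (q * i + j) * (g ^ t) ^ (ν * ((q + 1) / 2)) = 0 := by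
  obtain ⟨d, hd⟩ := htdvd
  obtain ⟨e, he⟩ := hte
  subst he
  have hq3 : 3 ≤ q := by
    obtain ⟨k, hk⟩ := hqodd
    have := hq.two_le
    omega
  have hd1 : 1 ≤ d := by
    rcases Nat.eq_zero_or_pos d with h | h
    · subst h; simp at hd; omega
    · exact h
  have he1 : 1 ≤ e := by omega
  have hq1 : q = (e + e) * d + 1 := by
    have := Nat.eq_add_of_sub_eq (by omega) hd
    omega
  -- abstract P = e * d
  obtain ⟨P, hPdef⟩ : ∃ P, e * d = P := ⟨_, rfl⟩
  have hPd : d ∣ P := hPdef ▸ dvd_mul_left d e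
  have hq2P : q = 2 * P + 1 := by
    have : (e + e) * d = 2 * (e * d) := by ring
    omega
  have hP1 : 1 ≤ P := by omega
  have hh : (q + 1) / 2 = P + 1 := by omega
  have hqt : (q - 1) / (e + e) = d := by
    rw [hd]; exact Nat.mul_div_cancel_left d (by omega)
  have h2 : q ^ 2 = (e + e) * (2 * (P + 1) * d) + 1 := by
    rw [hq1, ← hPdef]; ring
  have hm : (q ^ 2 - 1) / (e + e) = 2 * (P + 1) * d := by
    rw [Nat.sub_eq_of_eq_add h2]
    exact Nat.mul_div_cancel_left _ (by omega)
  -- order of θ = g^(e+e)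
  have hθ : orderOf (g ^ (e + e)) = 2 * (P + 1) * d := by
    rw [orderOf_pow' g (n := e + e) (by omega), hg,
      Nat.gcd_eq_right (⟨2 * (P + 1) * d, by omega⟩ : (e + e) ∣ q ^ 2 - 1), ← hm, hm]
  -- bounds
  rw [hh, hqt] at hi hj
  apply Finset.sum_eq_zero
  intro k _
  have key : ∑ ν ∈ Finset.range ((q ^ 2 - 1) / (e + e)),
      ((g ^ (e + e)) ^ (q * i + j + (q + 1) / 2)) ^ ν = 0 := by
    set x := (g ^ (e + e)) ^ (q * i + j + (q + 1) / 2) with hx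
    have hx1 : x ≠ 1 := by
      intro hcon
      have hdvd : orderOf (g ^ (e + e)) ∣ q * i + j + (q + 1) / 2 :=
        orderOf_dvd_of_pow_eq_one hcon
      rw [hθ] at hdvd
      have hs : q * i + j + (q + 1) / 2 = (2 * P + 1) * i + j + (P + 1) := by
        rw [hh, hq2P]
      rw [hs] at hdvd
      refine key_not_dvd (P : ℤ) (d : ℤ) (i : ℤ) (j : ℤ) (by omega)
        (by exact_mod_cast hPd) (by omega) (by omega) (by omega) (by omega) (by omega) ?_
      exact_mod_cast Int.natCast_dvd_natCast.mpr hdvd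
    have hxm : x ^ ((q ^ 2 - 1) / (e + e)) = 1 := by
      rw [hx, ← pow_mul, mul_comm, pow_mul, hm, ← hθ, pow_orderOf_eq_one, one_pow]
    rw [geom_sum_eq hx1, hxm, sub_self, zero_div]
  calc ∑ ν ∈ Finset.range ((q ^ 2 - 1) / (e + e)),
        (g ^ k * (g ^ (e + e)) ^ ν) ^ (q * i + j) * (g ^ (e + e)) ^ (ν * ((q + 1) / 2))
      = ∑ ν ∈ Finset.range ((q ^ 2 - 1) / (e + e)),
        (g ^ k) ^ (q * i + j) * ((g ^ (e + e)) ^ (q * i + j + (q + 1) / 2)) ^ ν := by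
        refine Finset.sum_congr rfl fun ν _ => ?_
        simp only [mul_pow, ← pow_mul, ← pow_add]
        congr 1
        ring
    _ = (g ^ k) ^ (q * i + j) * ∑ ν ∈ Finset.range ((q ^ 2 - 1) / (e + e)),
        ((g ^ (e + e)) ^ (q * i + j + (q + 1) / 2)) ^ ν := by rw [Finset.mul_sum]
    _ = 0 := by rw [key, mul_zero]
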